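/- There is no 3×7 matrix over a field of odd characteristic whose columns realize the Fano plane incidence structure: i.e., such that each of the seven triples of columns corresponding to lines of the Fano plane is linearly dependent while every other triple of columns is linearly independent. -/

import Mathlib

open Matrix

lemma li_iff_det {K : Type*} [Field K] (M : Matrix (Fin 3) (Fin 7) K) (i j k : Fin 7)
    (hij : i ≠ j) (hik : i ≠ k) (hjk : j ≠ k) :
    (LinearIndependent K fun s : ({i, j, k} : Finset (Fin 7)) => fun r => M r s.1) ↔
      (M.submatrix id ![i, j, k]).det ≠ 0 := by
  have hinj : Function.Injective ![i, j, k] := by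
    intro a b hab
    fin_cases a <;> fin_cases b <;> simp_all
  have hrange : Set.range ![i, j, k] = (({i, j, k} : Finset (Fin 7)) : Set (Fin 7)) := by
    ext x
    constructor
    · rintro ⟨t, rfl⟩; fin_cases t <;> simp
    · intro hx
      simp only [Finset.coe_insert, Set.mem_insert_iff, Finset.coe_singleton,
        Set.mem_singleton_iff] at hx
      rcases hx with rfl | rfl | rfl
      exacts [⟨0, rfl⟩, ⟨1, rfl⟩, ⟨2, rfl⟩]
  let e : Fin 3 ≃ {x // x ∈ ({i, j, k} : Finset (Fin 7))} :=
    (Equiv.ofInjective _ hinj).trans (Equiv.setCongr hrange)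
  have h1 : (LinearIndependent K fun s : ({i, j, k} : Finset (Fin 7)) => fun r => M r s.1) ↔
      LinearIndependent K (fun t : Fin 3 => fun r => M r (![i, j, k] t)) :=
    (linearIndependent_equiv' e (by funext t; simp only [e, Equiv.ofInjective, Equiv.ofLeftInverse, Equiv.setCongr, Equiv.subtypeEquivProp, Equiv.subtypeEquiv, Equiv.trans_apply, Equiv.coe_fn_mk]; rfl)).symm
  rw [h1]
  have h2 : (fun t : Fin 3 => fun r => M r (![i, j, k] t)) =
      (M.submatrix id ![i, j, k]).col := rfl
  rw [h2, Matrix.linearIndependent_cols_iff_isUnit, Matrix.isUnit_iff_isUnit_det,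
    isUnit_iff_ne_zero]




/-- The lines of the Fano plane on point set `Fin 7` (0-indexed version of
`{3,5,6},{2,5,7},{1,6,7},{3,4,7},{1,4,5},{2,4,6},{1,2,3}`). -/
def fanoLines : Finset (Finset (Fin 7)) :=
  {{2, 4, 5}, {1, 4, 6}, {0, 5, 6}, {2, 3, 6}, {0, 3, 4}, {1, 3, 5}, {0, 1, 2}}

/-- A 3×7 matrix realizes the Fano plane if a triple of its columns is linearly
dependent exactly when it is a line of the Fano plane. -/
def RealizesFano (K : Type*) [Field K] (M : Matrix (Fin 3) (Fin 7) K) : Prop :=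
  ∀ S : Finset (Fin 7), S.card = 3 →
    ((¬ LinearIndependent K fun i : S => fun r => M r i.1) ↔ S ∈ fanoLines)

theorem stmt_7 (K : Type*) [Field K] (p : ℕ) [CharP K p] (hp : Odd p) :
    ¬ ∃ M : Matrix (Fin 3) (Fin 7) K, RealizesFano K M := by
  rintro ⟨M, hM⟩
  -- 2 ≠ 0 in K
  have h2 : (2 : K) ≠ 0 := by
    intro h20
    have : (p : ℕ) ∣ 2 := by
      have := (CharP.cast_eq_zero_iff K p 2).mp (by exact_mod_cast h20)
      exact this
    rcases (Nat.dvd_prime Nat.prime_two).mp this with rfl | rfl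
    · have h1 : (1 : K) = 0 := by
        have := (CharP.cast_eq_zero_iff K 1 1).mpr dvd_rfl
        exact_mod_cast this
      exact one_ne_zero h1
    · exact (Nat.not_odd_iff_even.mpr (by norm_num)) hp
  have getz : ∀ (i j k : Fin 7), i ≠ j → i ≠ k → j ≠ k →
      ({i, j, k} : Finset (Fin 7)).card = 3 → ({i, j, k} : Finset (Fin 7)) ∈ fanoLines →
      (M.submatrix id ![i, j, k]).det = 0 := by
    intro i j k hij hik hjk hcard hmem
    have h := (hM _ hcard).mpr hmem
    rw [li_iff_det M i j k hij hik hjk] at h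
    simpa using h
  have getn : ∀ (i j k : Fin 7), i ≠ j → i ≠ k → j ≠ k →
      ({i, j, k} : Finset (Fin 7)).card = 3 → ({i, j, k} : Finset (Fin 7)) ∉ fanoLines →
      (M.submatrix id ![i, j, k]).det ≠ 0 := by
    intro i j k hij hik hjk hcard hmem
    have h := hM _ hcard
    rw [li_iff_det M i j k hij hik hjk] at h
    intro hd
    exact hmem (h.mp (by simp [hd]))
  set B : Matrix (Fin 3) (Fin 3) K := M.submatrix id ![0, 1, 3] with hBdef
  have hB : B.det ≠ 0 := getn 0 1 3 (by decide) (by decide) (by decide) (by decide) (by decide)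
  have hBu : IsUnit B.det := isUnit_iff_ne_zero.2 hB
  set N : Matrix (Fin 3) (Fin 7) K := B⁻¹ * M with hNdef
  have hsub : ∀ f : Fin 3 → Fin 7, N.submatrix id f = B⁻¹ * (M.submatrix id f) := by
    intro f
    rw [hNdef, Matrix.submatrix_mul B⁻¹ M id id f Function.bijective_id]
    simp
  have hdet : ∀ f : Fin 3 → Fin 7, (N.submatrix id f).det = B⁻¹.det * (M.submatrix id f).det := by
    intro f; rw [hsub f, Matrix.det_mul]
  have hBinv : B⁻¹.det ≠ 0 := by
    rw [Matrix.det_nonsing_inv, Ring.inverse_eq_inv']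
    exact inv_ne_zero hB
  have nz : ∀ (i j k : Fin 7), i ≠ j → i ≠ k → j ≠ k →
      ({i, j, k} : Finset (Fin 7)).card = 3 → ({i, j, k} : Finset (Fin 7)) ∉ fanoLines →
      (N.submatrix id ![i, j, k]).det ≠ 0 := by
    intro i j k hij hik hjk hcard hmem
    rw [hdet]
    exact mul_ne_zero hBinv (getn i j k hij hik hjk hcard hmem)
  have zz : ∀ (i j k : Fin 7), i ≠ j → i ≠ k → j ≠ k →
      ({i, j, k} : Finset (Fin 7)).card = 3 → ({i, j, k} : Finset (Fin 7)) ∈ fanoLines →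
      (N.submatrix id ![i, j, k]).det = 0 := by
    intro i j k hij hik hjk hcard hmem
    rw [hdet, getz i j k hij hik hjk hcard hmem, mul_zero]
  have hone : N.submatrix id ![0, 1, 3] = 1 := by
    rw [hsub]
    exact Matrix.nonsing_inv_mul B hBu
  have hc : ∀ r t, N r (![0, 1, 3] t) = (1 : Matrix (Fin 3) (Fin 3) K) r t :=
    fun r t => congrFun (congrFun hone r) t
  have n00 : N 0 0 = 1 := by simpa [Matrix.one_apply] using hc 0 0
  have n10 : N 1 0 = 0 := by simpa [Matrix.one_apply] using hc 1 0
  have n20 : N 2 0 = 0 := by simpa [Matrix.one_apply] using hc 2 0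
  have n01 : N 0 1 = 0 := by simpa [Matrix.one_apply] using hc 0 1
  have n11 : N 1 1 = 1 := by simpa [Matrix.one_apply] using hc 1 1
  have n21 : N 2 1 = 0 := by simpa [Matrix.one_apply] using hc 2 1
  have n03 : N 0 3 = 0 := by simpa [Matrix.one_apply] using hc 0 2
  have n13 : N 1 3 = 0 := by simpa [Matrix.one_apply] using hc 1 2
  have n23 : N 2 3 = 1 := by simpa [Matrix.one_apply] using hc 2 2
  -- line determinant equations
  have e012 := zz 0 1 2 (by decide) (by decide) (by decide) (by decide) (by decide)
  have e034 := zz 0 3 4 (by decide) (by decide) (by decide) (by decide) (by decide)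
  have e135 := zz 1 3 5 (by decide) (by decide) (by decide) (by decide) (by decide)
  have e236 := zz 2 3 6 (by decide) (by decide) (by decide) (by decide) (by decide)
  have e056 := zz 0 5 6 (by decide) (by decide) (by decide) (by decide) (by decide)
  have e146 := zz 1 4 6 (by decide) (by decide) (by decide) (by decide) (by decide)
  have e245 := zz 2 4 5 (by decide) (by decide) (by decide) (by decide) (by decide)
  -- nonzero determinants
  have f023 := nz 0 2 3 (by decide) (by decide) (by decide) (by decide) (by decide)
  have f134 := nz 1 3 4 (by decide) (by decide) (by decide) (by decide) (by decide)
  have f014 := nz 0 1 4 (by decide) (by decide) (by decide) (by decide) (by decide)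
  have f035 := nz 0 3 5 (by decide) (by decide) (by decide) (by decide) (by decide)
  have f015 := nz 0 1 5 (by decide) (by decide) (by decide) (by decide) (by decide)
  have f136 := nz 1 3 6 (by decide) (by decide) (by decide) (by decide) (by decide)
  rw [Matrix.det_fin_three] at e012 e034 e135 e236 e056 e146 e245 f023 f134 f014 f035 f015 f136
  simp only [Matrix.submatrix_apply, id, Matrix.cons_val_zero, Matrix.cons_val_one,
    Matrix.head_cons, Matrix.cons_val_two, Matrix.tail_cons,
    n00, n10, n20, n01, n11, n21, n03, n13, n23] at e012 e034 e135 e236 e056 e146 e245 f023 f134 f014 f035 f015 f136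
  ring_nf at e012 e034 e135 e236 e056 e146 e245 f023 f134 f014 f035 f015 f136
  have key : (2 : K) * ((B⁻¹ * M) 2 4 * (B⁻¹ * M) 1 5 * (B⁻¹ * M) 1 2 * (B⁻¹ * M) 0 6) = 0 := by
    linear_combination ((B⁻¹ * M) 2 4 * (B⁻¹ * M) 1 5) * e236 - (B⁻¹ * M) 1 6 * e245 +
      ((B⁻¹ * M) 0 4 * (B⁻¹ * M) 1 2) * e056 + ((B⁻¹ * M) 1 2 * (B⁻¹ * M) 1 5) * e146 +
      ((B⁻¹ * M) 1 6 * ((B⁻¹ * M) 0 4 * (B⁻¹ * M) 1 5 - (B⁻¹ * M) 1 4 * (B⁻¹ * M) 0 5)) * e012 +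
      ((B⁻¹ * M) 1 2 * (B⁻¹ * M) 2 4 * (B⁻¹ * M) 1 6) * e135 -
      ((B⁻¹ * M) 0 2 * (B⁻¹ * M) 2 5 * (B⁻¹ * M) 1 6) * e034
  have hP : ((B⁻¹ * M) 2 4 * (B⁻¹ * M) 1 5 * (B⁻¹ * M) 1 2 * (B⁻¹ * M) 0 6) ≠ 0 :=
    mul_ne_zero (mul_ne_zero (mul_ne_zero f014 (neg_ne_zero.mp f035)) f023) f136
  rcases mul_eq_zero.mp key with h | h
  · exact h2 h
  · exact hP h
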